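/- Let m ≥ 1 be an integer. Then ∑_{j=0}^∞ (m/(m+2j)) · C(m+2j, m+j) · 2^{−(m+2j)} / (m+j+1) = 2/((m+1)(m+2)). -/

import Mathlib

open Real Finset MeasureTheory

noncomputable def W (m j : ℕ) : ℝ :=
  ((m : ℝ) / ((m : ℝ) + 2 * (j : ℝ))) * (Nat.choose (m + 2 * j) (m + j) : ℝ) *
      (2 : ℝ) ^ (-((m : ℤ) + 2 * (j : ℤ)))

lemma two_zpow_eq (m j : ℕ) :
    (2 : ℝ) ^ (-((m : ℤ) + 2 * (j : ℤ))) = ((2 : ℝ) ^ (m + 2 * j))⁻¹ := by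
  rw [zpow_neg, show ((m : ℤ) + 2 * (j : ℤ)) = ((m + 2 * j : ℕ) : ℤ) by push_cast; ring,
    zpow_natCast]

lemma denom_pos (m j : ℕ) (hm : 1 ≤ m) : (0 : ℝ) < (m : ℝ) + 2 * (j : ℝ) := by
  have : (1 : ℝ) ≤ (m : ℝ) := by exact_mod_cast hm
  have : (0 : ℝ) ≤ (j : ℝ) := Nat.cast_nonneg j
  linarith

lemma cast_choose_le_two_pow (n k : ℕ) : (Nat.choose n k : ℝ) ≤ 2 ^ n := by
  have : Nat.choose n k ≤ 2 ^ n := by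
    rcases le_or_gt k n with h | h
    · calc Nat.choose n k ≤ ∑ i ∈ range (n + 1), Nat.choose n i :=
          Finset.single_le_sum (f := fun i => Nat.choose n i) (fun i _ => Nat.zero_le _)
            (by simpa using Nat.lt_succ_of_le h)
      _ = 2 ^ n := Nat.sum_range_choose n
    · simp [Nat.choose_eq_zero_of_lt h]
  exact_mod_cast this

lemma W_nonneg (m j : ℕ) : 0 ≤ W m j := by
  unfold W
  positivity

lemma W_le_frac (m j : ℕ) (hm : 1 ≤ m) : W m j ≤ (m : ℝ) / ((m : ℝ) + 2 * (j : ℝ)) := by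
  have hd := denom_pos m j hm
  unfold W
  rw [two_zpow_eq]
  have h1 : (Nat.choose (m + 2 * j) (m + j) : ℝ) * ((2 : ℝ) ^ (m + 2 * j))⁻¹ ≤ 1 := by
    rw [mul_inv_le_iff₀ (by positivity), one_mul]
    exact cast_choose_le_two_pow _ _
  have h2 : 0 ≤ (m : ℝ) / ((m : ℝ) + 2 * (j : ℝ)) := by positivity
  calc (m : ℝ) / ((m : ℝ) + 2 * (j : ℝ)) * (Nat.choose (m + 2 * j) (m + j) : ℝ) *
      ((2 : ℝ) ^ (m + 2 * j))⁻¹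
      = ((m : ℝ) / ((m : ℝ) + 2 * (j : ℝ))) *
        ((Nat.choose (m + 2 * j) (m + j) : ℝ) * ((2 : ℝ) ^ (m + 2 * j))⁻¹) := by ring
    _ ≤ ((m : ℝ) / ((m : ℝ) + 2 * (j : ℝ))) * 1 := mul_le_mul_of_nonneg_left h1 h2
    _ = _ := mul_one _

lemma W_le_one (m j : ℕ) (hm : 1 ≤ m) : W m j ≤ 1 := by
  refine (W_le_frac m j hm).trans ?_
  rw [div_le_one (denom_pos m j hm)]
  have : (0 : ℝ) ≤ (j : ℝ) := Nat.cast_nonneg j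
  linarith

lemma summable_W_pow (m : ℕ) (hm : 1 ≤ m) {t : ℝ} (ht0 : 0 ≤ t) (ht1 : t < 1) :
    Summable (fun j => W m j * t ^ (m + j)) := by
  refine Summable.of_nonneg_of_le (fun j => mul_nonneg (W_nonneg m j) (by positivity)) (fun j => ?_)
    (summable_geometric_of_lt_one ht0 ht1)
  calc W m j * t ^ (m + j) ≤ 1 * t ^ (m + j) :=
      mul_le_mul_of_nonneg_right (W_le_one m j hm) (by positivity)
    _ = t ^ m * t ^ j := by rw [one_mul, pow_add]
    _ ≤ 1 * t ^ j := mul_le_mul_of_nonneg_right (pow_le_one₀ ht0 ht1.le) (by positivity)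
    _ = t ^ j := one_mul _

lemma cast_choose_le_two_pow' (n k : ℕ) : (Nat.choose n k : ℝ) ≤ 2 ^ n := by
  have : Nat.choose n k ≤ 2 ^ n := by
    rcases le_or_gt k n with h | h
    · calc Nat.choose n k ≤ ∑ i ∈ range (n + 1), Nat.choose n i :=
          Finset.single_le_sum (f := fun i => Nat.choose n i) (fun i _ => Nat.zero_le _)
            (by simpa using Nat.lt_succ_of_le h)
      _ = 2 ^ n := Nat.sum_range_choose n
    · simp [Nat.choose_eq_zero_of_lt h]
  exact_mod_cast this

lemma catalan_partial_sum (N : ℕ) :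
    ∑ k ∈ range N, (catalan k : ℝ) / 4 ^ k = 2 - 2 * (Nat.centralBinom N : ℝ) / 4 ^ N := by
  induction N with
  | zero => simp [Nat.centralBinom_zero]
  | succ n ih =>
      rw [Finset.sum_range_succ, ih]
      have h1 : ((n : ℝ) + 1) * (Nat.centralBinom (n + 1) : ℝ) =
          2 * (2 * n + 1) * (Nat.centralBinom n : ℝ) := by
        exact_mod_cast Nat.succ_mul_centralBinom_succ n
      have h2 : ((n : ℝ) + 1) * (catalan n : ℝ) = (Nat.centralBinom n : ℝ) := by
        exact_mod_cast succ_mul_catalan_eq_centralBinom n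
      have hn : (0 : ℝ) < (n : ℝ) + 1 := by positivity
      have h4 : (0 : ℝ) < (4 : ℝ) ^ n := by positivity
      have h5 : (Nat.centralBinom (n + 1) : ℝ) = 4 * (Nat.centralBinom n : ℝ) - 2 * (catalan n : ℝ) := by
        have := mul_left_cancel₀ (a := (n : ℝ) + 1) (by positivity)
          (b := (Nat.centralBinom (n + 1) : ℝ))
          (c := 4 * (Nat.centralBinom n : ℝ) - 2 * (catalan n : ℝ))
        apply this
        linear_combination h1 + 2 * h2
      field_simp
      linear_combination (2 * (4:ℝ) ^ n) * h5

lemma summable_catalan_quarter : Summable (fun k => (catalan k : ℝ) / 4 ^ k) := by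
  apply summable_of_sum_range_le (c := 2) (fun k => by positivity)
  intro n
  rw [catalan_partial_sum]
  have : (0:ℝ) ≤ 2 * (Nat.centralBinom n : ℝ) / 4 ^ n := by positivity
  linarith

lemma catalan_le_pow (k : ℕ) : (catalan k : ℝ) ≤ 4 ^ k := by
  have h2 : ((k : ℝ) + 1) * (catalan k : ℝ) = (Nat.centralBinom k : ℝ) := by
    exact_mod_cast succ_mul_catalan_eq_centralBinom k
  have h3 : (Nat.centralBinom k : ℝ) ≤ 4 ^ k := by
    rw [Nat.centralBinom]
    calc (Nat.choose (2 * k) k : ℝ) ≤ 2 ^ (2 * k) := cast_choose_le_two_pow' _ _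
      _ = 4 ^ k := by rw [pow_mul]; norm_num
  nlinarith [(Nat.cast_nonneg (catalan k) : (0:ℝ) ≤ (catalan k : ℝ)), (Nat.cast_nonneg k : (0:ℝ) ≤ (k : ℝ)), h2, h3]

lemma summable_catalan_mul (x : ℝ) (hx0 : 0 ≤ x) (hx : x ≤ 1 / 4) :
    Summable (fun k => (catalan k : ℝ) * x ^ k) := by
  refine Summable.of_nonneg_of_le (fun k => by positivity) (fun k => ?_) summable_catalan_quarter
  have : x ^ k ≤ (1 / 4 : ℝ) ^ k := pow_le_pow_left₀ hx0 hx k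
  calc (catalan k : ℝ) * x ^ k ≤ (catalan k : ℝ) * (1 / 4) ^ k :=
      mul_le_mul_of_nonneg_left this (Nat.cast_nonneg _)
    _ = (catalan k : ℝ) / 4 ^ k := by rw [div_pow, one_pow]; ring

lemma tsum_catalan_le (x : ℝ) (hx0 : 0 ≤ x) (hx : x ≤ 1 / 4) :
    (∑' k, (catalan k : ℝ) * x ^ k) ≤ 2 := by
  have h1 : (∑' k, (catalan k : ℝ) * x ^ k) ≤ ∑' k, (catalan k : ℝ) / 4 ^ k := by
    refine Summable.tsum_le_tsum (fun k => ?_) (summable_catalan_mul x hx0 hx) summable_catalan_quarter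
    have : x ^ k ≤ (1 / 4 : ℝ) ^ k := pow_le_pow_left₀ hx0 hx k
    calc (catalan k : ℝ) * x ^ k ≤ (catalan k : ℝ) * (1 / 4) ^ k :=
        mul_le_mul_of_nonneg_left this (Nat.cast_nonneg _)
      _ = (catalan k : ℝ) / 4 ^ k := by rw [div_pow, one_pow]; ring
  refine h1.trans ?_
  have h2 : ∀ N, ∑ k ∈ range N, (catalan k : ℝ) / 4 ^ k ≤ 2 := by
    intro N
    rw [catalan_partial_sum]
    have : (0:ℝ) ≤ 2 * (Nat.centralBinom N : ℝ) / 4 ^ N := by positivity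
    linarith
  exact tsum_le_of_sum_range_le (fun k => by positivity) h2

lemma catalan_tsum_sq (x : ℝ) (hx0 : 0 ≤ x) (hx : x ≤ 1 / 4) :
    (∑' k, (catalan k : ℝ) * x ^ k) * (∑' k, (catalan k : ℝ) * x ^ k) =
      ∑' n, (catalan (n + 1) : ℝ) * x ^ n := by
  have hs : Summable (fun k => ‖(catalan k : ℝ) * x ^ k‖) := by
    have := summable_catalan_mul x hx0 hx
    refine this.congr fun k => ?_
    rw [Real.norm_of_nonneg (by positivity)]
  rw [tsum_mul_tsum_eq_tsum_sum_antidiagonal_of_summable_norm hs hs]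
  refine tsum_congr fun n => ?_
  calc ∑ ij ∈ Finset.HasAntidiagonal.antidiagonal n, ((catalan ij.1 : ℝ) * x ^ ij.1) * ((catalan ij.2 : ℝ) * x ^ ij.2)
      = ∑ ij ∈ Finset.HasAntidiagonal.antidiagonal n, ((catalan ij.1 : ℝ) * (catalan ij.2 : ℝ)) * x ^ n := by
        refine Finset.sum_congr rfl fun ij hij => ?_
        rw [Finset.HasAntidiagonal.mem_antidiagonal] at hij
        rw [← hij, pow_add]
        ring
    _ = (∑ ij ∈ Finset.HasAntidiagonal.antidiagonal n, (catalan ij.1 : ℝ) * (catalan ij.2 : ℝ)) * x ^ n := by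
        rw [← Finset.sum_mul]
    _ = (catalan (n + 1) : ℝ) * x ^ n := by
        congr 1
        rw [show ((catalan (n+1) : ℝ)) = ((catalan (n+1) : ℕ) : ℝ) from rfl, catalan_succ' n]
        push_cast
        rfl

lemma catalan_quadratic (x : ℝ) (hx0 : 0 ≤ x) (hx : x ≤ 1 / 4) :
    x * (∑' k, (catalan k : ℝ) * x ^ k) ^ 2 = (∑' k, (catalan k : ℝ) * x ^ k) - 1 := by
  have hsum := summable_catalan_mul x hx0 hx
  have h0 : (∑' k, (catalan k : ℝ) * x ^ k) =
      1 + ∑' k, (catalan (k + 1) : ℝ) * x ^ (k + 1) := by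
    rw [Summable.tsum_eq_zero_add hsum]
    norm_num
  have h1 : x * ∑' n, (catalan (n + 1) : ℝ) * x ^ n =
      ∑' n, (catalan (n + 1) : ℝ) * x ^ (n + 1) := by
    rw [← tsum_mul_left]
    refine tsum_congr fun n => ?_
    rw [pow_succ]
    ring
  rw [sq, catalan_tsum_sq x hx0 hx, h1, h0]
  ring

lemma choose_one_eq (j : ℕ) : Nat.choose (1 + 2 * j) (1 + j) = (1 + 2 * j) * catalan j := by
  have h1 : (2 * j + 1) * Nat.choose (2 * j) j = Nat.choose (2 * j + 1) (j + 1) * (j + 1) :=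
    Nat.add_one_mul_choose_eq (2 * j) j
  have h2 : (j + 1) * catalan j = Nat.centralBinom j := succ_mul_catalan_eq_centralBinom j
  have h3 : Nat.centralBinom j = Nat.choose (2 * j) j := rfl
  have key : Nat.choose (2 * j + 1) (j + 1) * (j + 1) = ((2 * j + 1) * catalan j) * (j + 1) := by
    rw [← h1]
    calc (2 * j + 1) * Nat.choose (2 * j) j = (2 * j + 1) * ((j + 1) * catalan j) := by
          rw [h2, h3]
      _ = (2 * j + 1) * catalan j * (j + 1) := by ring
  have := Nat.eq_of_mul_eq_mul_right (Nat.succ_pos j) key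
  rw [show 1 + 2 * j = 2 * j + 1 by ring, show 1 + j = j + 1 by ring]
  exact this

lemma W_one_eq (j : ℕ) : W 1 j = (catalan j : ℝ) * ((2 : ℝ) ^ (1 + 2 * j))⁻¹ := by
  unfold W
  rw [two_zpow_eq, choose_one_eq]
  have h : ((1:ℝ) + 2 * (j:ℝ)) ≠ 0 := by positivity
  push_cast
  field_simp

lemma G_one_eq {t : ℝ} (ht0 : 0 ≤ t) (ht1 : t < 1) :
    ∑' j, W 1 j * t ^ (1 + j) = 1 - Real.sqrt (1 - t) := by
  set x : ℝ := t / 4 with hxdef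
  have hx0 : 0 ≤ x := by positivity
  have hx : x ≤ 1 / 4 := by rw [hxdef]; linarith
  set f : ℝ := ∑' k, (catalan k : ℝ) * x ^ k with hfdef
  have hG : (∑' j, W 1 j * t ^ (1 + j)) = t / 2 * f := by
    rw [hfdef, ← tsum_mul_left]
    refine tsum_congr fun j => ?_
    rw [W_one_eq j, hxdef, div_pow]
    have e : ((2 : ℝ) ^ (1 + 2 * j))⁻¹ = (2 * 4 ^ j)⁻¹ := by
      rw [pow_add, pow_one, pow_mul]; norm_num
    rw [e, pow_add, pow_one]
    have h4 : ((4:ℝ) ^ j) ≠ 0 := by positivity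
    field_simp
  set g : ℝ := t / 2 * f with hgdef
  have hq := catalan_quadratic x hx0 hx
  have hg_sq : g ^ 2 = t * f - t := by
    have : g ^ 2 = t * (x * f ^ 2) := by rw [hgdef, hxdef]; ring
    rw [this, hq]
    ring
  have hf_le : f ≤ 2 := tsum_catalan_le x hx0 hx
  have hf_nonneg : 0 ≤ f := by
    rw [hfdef]
    exact tsum_nonneg fun k => by positivity
  have hg_le : g ≤ t := by
    rw [hgdef]
    nlinarith
  have hg_nonneg : 0 ≤ g := by rw [hgdef]; positivity
  have hsq : (1 - g) ^ 2 = 1 - t := by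
    have htf : t * f = 2 * g := by rw [hgdef]; ring
    nlinarith [hg_sq, htf]
  have h1g : 0 ≤ 1 - g := by linarith
  have : Real.sqrt (1 - t) = 1 - g := by
    rw [← hsq, Real.sqrt_sq h1g]
  rw [hG, this]
  ring

lemma W_two_eq (j : ℕ) : W 2 j = 2 * W 1 (j + 1) := by
  unfold W
  rw [two_zpow_eq, two_zpow_eq]
  have e1 : 2 + 2 * j = 2 * j + 2 := by ring
  have e2 : 2 + j = j + 2 := by ring
  have e3 : 1 + 2 * (j + 1) = 2 * j + 3 := by ring
  have e4 : 1 + (j + 1) = j + 2 := by ring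
  rw [e1, e2, e3, e4]
  have hs2 : Nat.choose (2 * j + 3) (j + 2) = Nat.choose (2 * j + 3) (j + 1) := by
    have h := Nat.choose_symm (show j + 2 ≤ 2 * j + 3 by omega)
    rw [show 2 * j + 3 - (j + 2) = j + 1 from by omega] at h
    exact h.symm
  rw [hs2]
  have hs1 : Nat.choose (2 * j + 2) (j + 2) = Nat.choose (2 * j + 2) j := by
    have h := Nat.choose_symm (show j + 2 ≤ 2 * j + 2 by omega)
    rw [show 2 * j + 2 - (j + 2) = j from by omega] at h
    exact h.symm
  rw [hs1]
  have key : (2 * j + 3) * Nat.choose (2 * j + 2) j = Nat.choose (2 * j + 3) (j + 1) * (j + 1) :=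
    Nat.add_one_mul_choose_eq (2 * j + 2) j
  have keyR : ((2 * (j:ℝ) + 3)) * (Nat.choose (2 * j + 2) j : ℝ) =
      (Nat.choose (2 * j + 3) (j + 1) : ℝ) * ((j:ℝ) + 1) := by exact_mod_cast key
  have hp1 : ((2:ℝ) ^ (2 * j + 3))⁻¹ = ((2:ℝ) ^ (2 * j + 2))⁻¹ / 2 := by
    rw [pow_succ]; field_simp
  rw [hp1]
  have hp : ((2:ℝ) ^ (2 * j + 2))⁻¹ ≠ 0 := by positivity
  set a : ℝ := (Nat.choose (2 * j + 2) j : ℝ) with ha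
  set b : ℝ := (Nat.choose (2 * j + 3) (j + 1) : ℝ) with hb
  set p : ℝ := ((2:ℝ) ^ (2 * j + 2))⁻¹ with hpdef
  have main : ((2:ℝ) / (2 + 2 * (j:ℝ))) * a = ((1:ℝ) / (1 + 2 * ((j:ℝ) + 1))) * b := by
    have hd1 : ((2:ℝ) + 2 * (j:ℝ)) ≠ 0 := by positivity
    have hd2 : ((1:ℝ) + 2 * ((j:ℝ) + 1)) ≠ 0 := by positivity
    field_simp
    linear_combination keyR
  push_cast
  push_cast at main
  calc (2:ℝ) / (2 + 2 * (j:ℝ)) * a * p = (((2:ℝ) / (2 + 2 * (j:ℝ))) * a) * p := by ring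
    _ = (((1:ℝ) / (1 + 2 * ((j:ℝ) + 1))) * b) * p := by rw [main]
    _ = 2 * (1 / (1 + 2 * ((j:ℝ) + 1)) * b * (p / 2)) := by ring

lemma W_rec (m j : ℕ) (hm : 1 ≤ m) :
    2 * W (m + 1) (j + 1) = W m (j + 1) + W (m + 2) j := by
  unfold W
  rw [two_zpow_eq, two_zpow_eq, two_zpow_eq]
  have e1 : m + 1 + 2 * (j + 1) = (m + 2 * j + 2) + 1 := by ring
  have e2 : m + 1 + (j + 1) = (m + j + 1) + 1 := by ring
  have e3 : m + 2 * (j + 1) = m + 2 * j + 2 := by ring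
  have e4 : m + (j + 1) = m + j + 1 := by ring
  have e5 : m + 2 + 2 * j = m + 2 * j + 2 := by ring
  have e6 : m + 2 + j = (m + j + 1) + 1 := by ring
  rw [e1, e2, e3, e4, e5, e6]
  set N := m + 2 * j + 2 with hN
  set K := m + j + 1 with hK
  have hPascal : Nat.choose (N + 1) (K + 1) = Nat.choose N K + Nat.choose N (K + 1) :=
    Nat.choose_succ_succ N K
  have hR : Nat.choose N (K + 1) * (K + 1) = Nat.choose N K * (j + 1) := by
    have h := Nat.choose_succ_right_eq N K
    rwa [show N - K = j + 1 from by omega] at h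
  set a : ℝ := (Nat.choose N K : ℝ) with ha
  set b : ℝ := (Nat.choose N (K + 1) : ℝ) with hb
  have hRR : b * ((m:ℝ) + (j:ℝ) + 2) = a * ((j:ℝ) + 1) := by
    have : (Nat.choose N (K+1) : ℝ) * ((K:ℝ) + 1) = (Nat.choose N K : ℝ) * ((j:ℝ) + 1) := by
      exact_mod_cast hR
    rw [← ha, ← hb] at this
    have hKr : (K:ℝ) = (m:ℝ) + (j:ℝ) + 1 := by rw [hK]; push_cast; ring
    rw [hKr] at this
    linarith [this]
  rw [hPascal]
  have hp1 : ((2:ℝ) ^ (N + 1))⁻¹ = ((2:ℝ) ^ N)⁻¹ / 2 := by rw [pow_succ]; field_simp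
  rw [hp1]
  set p : ℝ := ((2:ℝ) ^ N)⁻¹ with hpdef
  have hm' : (1:ℝ) ≤ (m:ℝ) := by exact_mod_cast hm
  have hd1 : ((m:ℝ) + 1 + 2 * ((j:ℝ) + 1)) ≠ 0 := by positivity
  have hd2 : ((m:ℝ) + 2 * ((j:ℝ) + 1)) ≠ 0 := by positivity
  have hd3 : ((m:ℝ) + 2 + 2 * (j:ℝ)) ≠ 0 := by positivity
  have main : ((m:ℝ) + 1) / ((m:ℝ) + 1 + 2 * ((j:ℝ) + 1)) * ((a : ℝ) + b) =
      (m:ℝ) / ((m:ℝ) + 2 * ((j:ℝ) + 1)) * a + ((m:ℝ) + 2) / ((m:ℝ) + 2 + 2 * (j:ℝ)) * b := by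
    field_simp
    linear_combination (-2:ℝ) * ((m:ℝ) + 2 * ((j:ℝ) + 1)) * hRR
  push_cast
  push_cast at main
  calc 2 * (((m:ℝ) + 1) / ((m:ℝ) + 1 + 2 * ((j:ℝ) + 1)) * ((a : ℝ) + b) * (p / 2))
      = (((m:ℝ) + 1) / ((m:ℝ) + 1 + 2 * ((j:ℝ) + 1)) * ((a : ℝ) + b)) * p := by ring
    _ = ((m:ℝ) / ((m:ℝ) + 2 * ((j:ℝ) + 1)) * a + ((m:ℝ) + 2) / ((m:ℝ) + 2 + 2 * (j:ℝ)) * b) * p := by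
        rw [main]
    _ = (m:ℝ) / ((m:ℝ) + 2 * ((j:ℝ) + 1)) * a * p + ((m:ℝ) + 2) / ((m:ℝ) + 2 + 2 * (j:ℝ)) * b * p := by
        ring

lemma W_diag (m : ℕ) (hm : 1 ≤ m) : W m 0 = ((2:ℝ) ^ m)⁻¹ := by
  unfold W
  rw [two_zpow_eq]
  have hm0 : ((m:ℝ)) ≠ 0 := by
    have : (1:ℝ) ≤ (m:ℝ) := by exact_mod_cast hm
    linarith
  simp [Nat.choose_self]
  omega

lemma W_one_zero : W 1 0 = 1 / 2 := by
  rw [W_diag 1 le_rfl]; norm_num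

lemma G_two_eq {t : ℝ} (ht0 : 0 ≤ t) (ht1 : t < 1) :
    ∑' j, W 2 j * t ^ (2 + j) = 2 * (∑' j, W 1 j * t ^ (1 + j)) - t := by
  have hs1 := summable_W_pow 1 le_rfl ht0 ht1
  have hg : (fun j => 2 * (W 1 j * t ^ (1 + j))) = fun j => 2 * W 1 j * t ^ (1 + j) := by
    funext j; ring
  have hsum2 : Summable (fun j => 2 * W 1 j * t ^ (1 + j)) := by
    rw [← hg]; exact hs1.mul_left 2
  have key : ∑' j, W 2 j * t ^ (2 + j) = ∑' j, 2 * W 1 (j + 1) * t ^ (1 + (j + 1)) := by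
    refine tsum_congr fun j => ?_
    rw [W_two_eq j, show 2 + j = 1 + (j + 1) from by ring]
  rw [key]
  have h0 := Summable.tsum_eq_zero_add hsum2
  have : ∑' j, 2 * W 1 (j + 1) * t ^ (1 + (j + 1)) =
      (∑' j, 2 * W 1 j * t ^ (1 + j)) - 2 * W 1 0 * t ^ (1 + 0) := by
    rw [h0]; ring
  rw [this, ← hg, tsum_mul_left, W_one_zero]
  norm_num

lemma G_rec (m : ℕ) (hm : 1 ≤ m) {t : ℝ} (ht0 : 0 ≤ t) (ht1 : t < 1) :
    ∑' j, W (m + 2) j * t ^ (m + 2 + j) =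
      2 * (∑' j, W (m + 1) j * t ^ (m + 1 + j)) - t * ∑' j, W m j * t ^ (m + j) := by
  have hsm := summable_W_pow m hm ht0 ht1
  have hsm1 := summable_W_pow (m + 1) (by omega) ht0 ht1
  set h : ℕ → ℝ := fun j => 2 * (W (m + 1) j * t ^ (m + 1 + j)) - t * (W m j * t ^ (m + j))
    with hh
  have hsumh : Summable h := (hsm1.mul_left 2).sub (hsm.mul_left t)
  have htsum : ∑' j, h j =
      2 * (∑' j, W (m + 1) j * t ^ (m + 1 + j)) - t * ∑' j, W m j * t ^ (m + j) := by
    rw [hh, Summable.tsum_sub (hsm1.mul_left 2) (hsm.mul_left t), tsum_mul_left, tsum_mul_left]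
  have hzero : h 0 = 0 := by
    rw [hh]
    simp only
    rw [W_diag m hm, W_diag (m + 1) (by omega)]
    rw [pow_succ (2:ℝ) m, show m + 1 + 0 = (m + 0) + 1 from by ring, pow_succ t (m + 0)]
    field_simp
    ring
  have hstep : ∀ j, h (j + 1) = W (m + 2) j * t ^ (m + 2 + j) := by
    intro j
    rw [hh]
    simp only
    have hw := W_rec m j hm
    have e1 : m + 1 + (j + 1) = m + 2 + j := by ring
    have e2 : m + (j + 1) = m + 1 + j := by ring
    rw [e1, e2]
    have e3 : t * t ^ (m + 1 + j) = t ^ (m + 2 + j) := by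
      rw [show m + 2 + j = (m + 1 + j) + 1 from by ring, pow_succ]; ring
    calc 2 * (W (m + 1) (j + 1) * t ^ (m + 2 + j)) - t * (W m (j + 1) * t ^ (m + 1 + j))
        = (2 * W (m + 1) (j + 1)) * t ^ (m + 2 + j) - W m (j + 1) * (t * t ^ (m + 1 + j)) := by
          ring
      _ = (W m (j + 1) + W (m + 2) j) * t ^ (m + 2 + j) - W m (j + 1) * t ^ (m + 2 + j) := by
          rw [hw, e3]
      _ = W (m + 2) j * t ^ (m + 2 + j) := by ring
  have := Summable.tsum_eq_zero_add hsumh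
  rw [hzero, zero_add] at this
  rw [← htsum, this]
  exact tsum_congr fun j => (hstep j).symm

lemma G_eq (m : ℕ) (hm : 1 ≤ m) {t : ℝ} (ht0 : 0 ≤ t) (ht1 : t < 1) :
    ∑' j, W m j * t ^ (m + j) = (1 - Real.sqrt (1 - t)) ^ m := by
  set q : ℝ := 1 - Real.sqrt (1 - t) with hq
  have hqsq : q ^ 2 = 2 * q - t := by
    have h1 : Real.sqrt (1 - t) ^ 2 = 1 - t := Real.sq_sqrt (by linarith)
    rw [hq]
    nlinarith [h1]
  obtain ⟨k, rfl⟩ : ∃ k, m = k + 1 := ⟨m - 1, by omega⟩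
  clear hm
  induction k using Nat.strong_induction_on with
  | _ k ih =>
    match k with
    | 0 => simpa using G_one_eq ht0 ht1
    | 1 =>
        rw [show (1:ℕ) + 1 = 2 from rfl, G_two_eq ht0 ht1, G_one_eq ht0 ht1]
        rw [← hq]
        nlinarith [hqsq]
    | (Nat.succ (Nat.succ k')) =>
        have ihA := ih k' (by omega)
        have ihB := ih (k' + 1) (by omega)
        have hrec := G_rec (k' + 1) (by omega) ht0 ht1
        rw [show k' + 1 + 2 = k' + 2 + 1 from by omega] at hrec
        rw [show Nat.succ (Nat.succ k') + 1 = k' + 2 + 1 from by omega, hrec,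
          show k' + 1 + 1 = k' + 2 from by omega, ihB, ihA]
        have : q ^ (k' + 2 + 1) = q ^ (k' + 1) * q ^ 2 := by ring
        rw [this, hqsq]
        ring

lemma summable_main (m : ℕ) (hm : 1 ≤ m) :
    Summable (fun j => W m j / ((m : ℝ) + (j : ℝ) + 1)) := by
  have hb : Summable (fun j : ℕ => (m : ℝ) * (1 / ((j : ℝ) + 1) ^ 2)) := by
    apply Summable.mul_left
    have h1 : Summable (fun n : ℕ => 1 / (n : ℝ) ^ 2) :=
      Real.summable_one_div_nat_pow.mpr one_lt_two
    have h2 := (summable_nat_add_iff 1).mpr h1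
    refine h2.congr fun j => ?_
    push_cast
    ring
  refine Summable.of_nonneg_of_le (fun j => ?_) (fun j => ?_) hb
  · have := W_nonneg m j
    have hpos : (0:ℝ) < (m : ℝ) + (j : ℝ) + 1 := by positivity
    positivity
  · have h1 : W m j ≤ (m : ℝ) / ((j : ℝ) + 1) := by
      refine (W_le_frac m j hm).trans ?_
      apply div_le_div_of_nonneg_left (Nat.cast_nonneg m) (by positivity)
      have : (1:ℝ) ≤ (m:ℝ) := by exact_mod_cast hm
      linarith
    have h2 : (1:ℝ) / ((m : ℝ) + (j : ℝ) + 1) ≤ 1 / ((j : ℝ) + 1) := by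
      apply div_le_div_of_nonneg_left one_pos.le (by positivity)
      have : (0:ℝ) ≤ (m:ℝ) := Nat.cast_nonneg m
      linarith
    calc W m j / ((m : ℝ) + (j : ℝ) + 1) = W m j * (1 / ((m : ℝ) + (j : ℝ) + 1)) := by ring
      _ ≤ ((m : ℝ) / ((j : ℝ) + 1)) * (1 / ((j : ℝ) + 1)) := by
          apply mul_le_mul h1 h2 (by positivity) (by positivity)
      _ = (m : ℝ) * (1 / ((j : ℝ) + 1) ^ 2) := by
          have hj : ((j:ℝ) + 1) ≠ 0 := by positivity
          field_simp

lemma integral_term (m j : ℕ) :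
    ∫ t in Set.Ioo (0:ℝ) 1, W m j * t ^ (m + j) = W m j / ((m : ℝ) + (j : ℝ) + 1) := by
  rw [← integral_Ioc_eq_integral_Ioo, ← intervalIntegral.integral_of_le zero_le_one]
  rw [intervalIntegral.integral_const_mul, integral_pow]
  push_cast
  norm_num
  ring

lemma ftc_part (m : ℕ) (hm : 1 ≤ m) :
    ∫ t in Set.Ioo (0:ℝ) 1, (1 - Real.sqrt (1 - t)) ^ m =
      2 / (((m : ℝ) + 1) * ((m : ℝ) + 2)) := by
  set Ψ : ℝ → ℝ := fun t => 2 / ((m : ℝ) + 1) * (1 - Real.sqrt (1 - t)) ^ (m + 1) -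
      2 / ((m : ℝ) + 2) * (1 - Real.sqrt (1 - t)) ^ (m + 2) with hΨ
  have hcont : Continuous fun t : ℝ => (1 - Real.sqrt (1 - t)) ^ m := by
    apply Continuous.pow
    exact continuous_const.sub (Real.continuous_sqrt.comp (continuous_const.sub continuous_id))
  rw [← integral_Ioc_eq_integral_Ioo, ← intervalIntegral.integral_of_le zero_le_one]
  have hderiv : ∀ x ∈ Set.Ioo (0:ℝ) 1, HasDerivAt Ψ ((1 - Real.sqrt (1 - x)) ^ m) x := by
    intro x hx
    obtain ⟨hx0, hx1⟩ := hx
    have hupos : 0 < Real.sqrt (1 - x) := Real.sqrt_pos.mpr (by linarith)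
    set u : ℝ := Real.sqrt (1 - x) with hu
    have hune : u ≠ 0 := ne_of_gt hupos
    have hsd : HasDerivAt (fun t : ℝ => Real.sqrt (1 - t)) (-(1 / (2 * u))) x := by
      have h1 : HasDerivAt (fun t : ℝ => 1 - t) (-1) x := by
        simpa using (hasDerivAt_id x).const_sub 1
      have h2 := (Real.hasDerivAt_sqrt (show (1:ℝ) - x ≠ 0 by linarith)).comp x h1
      have h2' : HasDerivAt (fun t : ℝ => Real.sqrt (1 - t)) (1 / (2 * u) * -1) x := by
        simpa [Function.comp_def, ← hu] using h2
      have e : (1:ℝ) / (2 * u) * -1 = -(1 / (2 * u)) := by ring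
      rwa [e] at h2'
    have hq : HasDerivAt (fun t : ℝ => 1 - Real.sqrt (1 - t)) (1 / (2 * u)) x := by
      simpa using (hsd.const_sub 1)
    have h3 : HasDerivAt (fun t : ℝ => (1 - Real.sqrt (1 - t)) ^ (m + 1))
        (((m:ℝ) + 1) * (1 - u) ^ m * (1 / (2 * u))) x := by
      have h := hq.pow (m + 1)
      have e : ((m + 1 : ℕ) : ℝ) * (1 - u) ^ (m + 1 - 1) * (1 / (2 * u)) =
          ((m:ℝ) + 1) * (1 - u) ^ m * (1 / (2 * u)) := by push_cast; norm_num
      rwa [e] at h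
    have h4 : HasDerivAt (fun t : ℝ => (1 - Real.sqrt (1 - t)) ^ (m + 2))
        (((m:ℝ) + 2) * (1 - u) ^ (m + 1) * (1 / (2 * u))) x := by
      have h := hq.pow (m + 2)
      have e : ((m + 2 : ℕ) : ℝ) * (1 - u) ^ (m + 2 - 1) * (1 / (2 * u)) =
          ((m:ℝ) + 2) * (1 - u) ^ (m + 1) * (1 / (2 * u)) := by push_cast; norm_num
      rwa [e] at h
    have h5 := ((h3.const_mul (2 / ((m : ℝ) + 1))).sub (h4.const_mul (2 / ((m : ℝ) + 2))))
    have hm1 : ((m:ℝ) + 1) ≠ 0 := by positivity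
    have hm2 : ((m:ℝ) + 2) ≠ 0 := by positivity
    have e2 : 2 / ((m : ℝ) + 1) * (((m:ℝ) + 1) * (1 - u) ^ m * (1 / (2 * u))) -
        2 / ((m : ℝ) + 2) * (((m:ℝ) + 2) * (1 - u) ^ (m + 1) * (1 / (2 * u))) = (1 - u) ^ m := by
      rw [pow_succ]
      field_simp
      ring
    rw [hΨ]
    rw [← e2]
    exact h5
  have hint : IntervalIntegrable (fun t : ℝ => (1 - Real.sqrt (1 - t)) ^ m) volume 0 1 :=
    hcont.intervalIntegrable 0 1
  have hΨcont : ContinuousOn Ψ (Set.Icc 0 1) := by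
    apply Continuous.continuousOn
    rw [hΨ]
    apply Continuous.sub
    · exact continuous_const.mul ((continuous_const.sub
        (Real.continuous_sqrt.comp (continuous_const.sub continuous_id))).pow (m + 1))
    · exact continuous_const.mul ((continuous_const.sub
        (Real.continuous_sqrt.comp (continuous_const.sub continuous_id))).pow (m + 2))
  rw [intervalIntegral.integral_eq_sub_of_hasDerivAt_of_le zero_le_one hΨcont hderiv hint]
  have h1 : Real.sqrt (1 - 1) = 0 := by norm_num
  have h0 : Real.sqrt (1 - 0) = 1 := by norm_num
  rw [hΨ]
  simp only [h1, h0]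
  have hm1 : ((m:ℝ) + 1) ≠ 0 := by positivity
  have hm2 : ((m:ℝ) + 2) ≠ 0 := by positivity
  rw [sub_self, zero_pow (by omega), zero_pow (by omega)]
  norm_num
  field_simp
  ring

/-- For every integer `m ≥ 1`,
`∑_{j≥0} (m/(m+2j)) · C(m+2j, m+j) · 2^{-(m+2j)} / (m+j+1) = 2/((m+1)(m+2))`. -/
theorem first_passage_series_half (m : ℕ) (hm : 1 ≤ m) :
    (∑' j : ℕ,
        ((m : ℝ) / ((m : ℝ) + 2 * (j : ℝ))) * (Nat.choose (m + 2 * j) (m + j) : ℝ) *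
          (2 : ℝ) ^ (-((m : ℤ) + 2 * (j : ℤ))) / ((m : ℝ) + (j : ℝ) + 1)) =
      2 / (((m : ℝ) + 1) * ((m : ℝ) + 2)) := by
  have hLHS : (∑' j : ℕ,
      ((m : ℝ) / ((m : ℝ) + 2 * (j : ℝ))) * (Nat.choose (m + 2 * j) (m + j) : ℝ) *
        (2 : ℝ) ^ (-((m : ℤ) + 2 * (j : ℤ))) / ((m : ℝ) + (j : ℝ) + 1)) =
      ∑' j : ℕ, W m j / ((m : ℝ) + (j : ℝ) + 1) := rfl
  rw [hLHS]
  set μ := volume.restrict (Set.Ioo (0:ℝ) 1) with hμ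
  have hfc : ∀ j : ℕ, Continuous (fun t : ℝ => W m j * t ^ (m + j)) := fun j =>
    continuous_const.mul (continuous_pow (m + j))
  have hmeas : ∀ j : ℕ, AEStronglyMeasurable (fun t : ℝ => W m j * t ^ (m + j)) μ := fun j =>
    (hfc j).aestronglyMeasurable
  have hae : ∀ j : ℕ, 0 ≤ᵐ[μ] fun t : ℝ => W m j * t ^ (m + j) := by
    intro j
    have h : ∀ᵐ t ∂(volume.restrict (Set.Ioo (0:ℝ) 1)), 0 ≤ W m j * t ^ (m + j) := by
      rw [MeasureTheory.ae_restrict_iff' measurableSet_Ioo]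
      filter_upwards with t ht
      exact mul_nonneg (W_nonneg m j) (pow_nonneg ht.1.le _)
    rw [hμ]
    filter_upwards [h] with t ht
    exact ht
  have hInt : ∀ j : ℕ, Integrable (fun t : ℝ => W m j * t ^ (m + j)) μ := by
    intro j
    rw [hμ]
    exact ((hfc j).integrableOn_Icc (a := 0) (b := 1)).mono_set Set.Ioo_subset_Icc_self
  have hlint : ∀ j : ℕ, (∫⁻ t, ‖W m j * t ^ (m + j)‖₊ ∂μ) =
      ENNReal.ofReal (W m j / ((m : ℝ) + (j : ℝ) + 1)) := by
    intro j
    have h1 : (∫⁻ t, ‖W m j * t ^ (m + j)‖₊ ∂μ) =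
        ∫⁻ t, ENNReal.ofReal (W m j * t ^ (m + j)) ∂μ := by
      refine lintegral_congr_ae ?_
      filter_upwards [hae j] with t ht
      exact Real.enorm_eq_ofReal ht
    rw [h1, ← MeasureTheory.ofReal_integral_eq_lintegral_ofReal (hInt j) (hae j), hμ]
    rw [integral_term m j]
  have hne : (∑' j : ℕ, ∫⁻ t, ‖W m j * t ^ (m + j)‖₊ ∂μ) ≠ ⊤ := by
    have : (∑' j : ℕ, ∫⁻ t, ‖W m j * t ^ (m + j)‖₊ ∂μ) =
        ENNReal.ofReal (∑' j : ℕ, W m j / ((m : ℝ) + (j : ℝ) + 1)) := by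
      rw [ENNReal.ofReal_tsum_of_nonneg (fun j => by
        have := W_nonneg m j
        positivity) (summable_main m hm)]
      exact tsum_congr hlint
    rw [this]
    exact ENNReal.ofReal_ne_top
  have hswap := MeasureTheory.integral_tsum hmeas hne
  have h2 : (∑' j : ℕ, W m j / ((m : ℝ) + (j : ℝ) + 1)) =
      ∑' j : ℕ, ∫ t, W m j * t ^ (m + j) ∂μ := by
    refine tsum_congr fun j => ?_
    rw [hμ, integral_term m j]
  rw [h2, ← hswap]
  have h3 : (∫ t, (∑' j : ℕ, W m j * t ^ (m + j)) ∂μ) =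
      ∫ t in Set.Ioo (0:ℝ) 1, (1 - Real.sqrt (1 - t)) ^ m := by
    rw [hμ]
    refine MeasureTheory.setIntegral_congr_fun measurableSet_Ioo fun t ht => ?_
    exact G_eq m hm ht.1.le ht.2
  rw [h3, ftc_part m hm]
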